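/- Let X be an n×p real matrix with X ≠ 0, let γ₁ > 0 be the largest eigenvalue of X'X, and let D = I_p − γ₁⁻¹·X'X. Then as k → ∞, the matrix powers D^k converge to the orthogonal projection matrix onto the kernel of X (equivalently, onto the orthogonal complement of the column space of X'). -/

import Mathlib

open Filter Topology Matrix

/-- Let `X ≠ 0` be an `n × p` real matrix, `γ₁ > 0` its largest eigenvalue of
`XᵀX`, and `D = I_p − γ₁⁻¹ XᵀX`.  Then `D^k` converges, as `k → ∞`, to the
orthogonal projection matrix onto the kernel of `X` (the orthogonal
complement of the column space of `Xᵀ`). -/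
theorem stmt12 {n p : ℕ} (X : Matrix (Fin n) (Fin p) ℝ) (hX : X ≠ 0)
    (γ1 : ℝ) (hγ1 : 0 < γ1)
    (hev : ∃ v : Fin p → ℝ, v ≠ 0 ∧ (Xᵀ * X).mulVec v = γ1 • v)
    (hmax : ∀ (μ : ℝ) (v : Fin p → ℝ), v ≠ 0 → (Xᵀ * X).mulVec v = μ • v → μ ≤ γ1)
    (D : Matrix (Fin p) (Fin p) ℝ)
    (hD : D = (1 : Matrix (Fin p) (Fin p) ℝ) - γ1⁻¹ • (Xᵀ * X)) :
    ∃ Pker : Matrix (Fin p) (Fin p) ℝ,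
      Pkerᵀ = Pker ∧
      Pker * Pker = Pker ∧
      (∀ v : Fin p → ℝ, X.mulVec (Pker.mulVec v) = 0) ∧
      (∀ v : Fin p → ℝ, X.mulVec v = 0 → Pker.mulVec v = v) ∧
      Tendsto (fun k => D ^ k) atTop (𝓝 Pker) := by
  set A : Matrix (Fin p) (Fin p) ℝ := Xᵀ * X with hA_def
  have hXA : Xᴴ = Xᵀ := conjTranspose_eq_transpose_of_trivial X
  have hA : A.IsHermitian := by
    rw [hA_def, ← hXA]; exact isHermitian_conjTranspose_mul_self X
  have hPSD : A.PosSemidef := by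
    rw [hA_def, ← hXA]; exact posSemidef_conjTranspose_mul_self X
  set lam : Fin p → ℝ := hA.eigenvalues with hlam
  set U : Matrix (Fin p) (Fin p) ℝ := (hA.eigenvectorUnitary : Matrix (Fin p) (Fin p) ℝ)
    with hU
  have hUstar : U * star U = 1 :=
    (Matrix.mem_unitaryGroup_iff).mp hA.eigenvectorUnitary.2
  have hstarU : star U * U = 1 :=
    (Matrix.mem_unitaryGroup_iff').mp hA.eigenvectorUnitary.2
  have hspec : A = U * diagonal lam * star U := by
    have := hA.spectral_theorem
    simpa using this
  -- eigenvalue bounds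
  have hlam_nonneg : ∀ i, 0 ≤ lam i := fun i => hPSD.eigenvalues_nonneg i
  have hlam_le : ∀ i, lam i ≤ γ1 := by
    intro i
    refine hmax _ (⇑(hA.eigenvectorBasis i)) ?_ ?_
    · intro h
      exact hA.eigenvectorBasis.orthonormal.ne_zero i (by ext x; exact congrFun h x)
    · exact hA.mulVec_eigenvectorBasis i
  set d : Fin p → ℝ := fun i => 1 - γ1⁻¹ * lam i with hd
  set e : Fin p → ℝ := fun i => if lam i = 0 then 1 else 0 with he
  set Pker : Matrix (Fin p) (Fin p) ℝ := U * diagonal e * star U with hP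
  -- D in diagonal form
  have hDdiag : D = U * diagonal d * star U := by
    have h1 : diagonal d = 1 - γ1⁻¹ • diagonal lam := by
      rw [← diagonal_one, ← diagonal_smul, ← diagonal_sub]
      congr 1
    rw [hD, h1, Matrix.mul_sub, Matrix.sub_mul, Matrix.mul_one, hUstar,
      Matrix.mul_smul, Matrix.smul_mul, hspec]
  have key : ∀ M N : Matrix (Fin p) (Fin p) ℝ,
      (U * M * star U) * (U * N * star U) = U * (M * N) * star U := by
    intro M N
    simp only [Matrix.mul_assoc]
    rw [← Matrix.mul_assoc (star U) U, hstarU, Matrix.one_mul]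
  have hpow : ∀ k : ℕ, D ^ k = U * diagonal (fun i => d i ^ k) * star U := by
    intro k
    induction k with
    | zero =>
      rw [pow_zero]
      have h0 : diagonal (fun i => d i ^ 0) = (1 : Matrix (Fin p) (Fin p) ℝ) := by
        simp
      rw [h0, Matrix.mul_one, hUstar]
    | succ k ih =>
      rw [pow_succ, ih, hDdiag, key, diagonal_mul_diagonal]
      congr 2
  -- convergence
  have hdiag_tendsto : Tendsto (fun k : ℕ => (fun i => d i ^ k)) atTop (𝓝 e) := by
    rw [tendsto_pi_nhds]
    intro i
    by_cases h : lam i = 0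
    · have : d i = 1 := by simp [hd, h]
      simp only [this, one_pow, he, h, if_pos]
      exact tendsto_const_nhds
    · have hpos : 0 < lam i := lt_of_le_of_ne (hlam_nonneg i) (Ne.symm h)
      have h0 : 0 ≤ d i := by
        have : γ1⁻¹ * lam i ≤ 1 := by
          rw [← div_eq_inv_mul, div_le_one hγ1]
          exact hlam_le i
        simp [hd]; linarith
      have h1 : d i < 1 := by
        have : 0 < γ1⁻¹ * lam i := mul_pos (inv_pos.mpr hγ1) hpos
        simp [hd]; linarith
      have := tendsto_pow_atTop_nhds_zero_of_lt_one h0 h1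
      simpa [he, h] using this
  have hcont : Continuous (fun v : Fin p → ℝ => U * diagonal v * star U) :=
    (continuous_const.matrix_mul (continuous_id.matrix_diagonal)).matrix_mul continuous_const
  have hDk : Tendsto (fun k => D ^ k) atTop (𝓝 Pker) := by
    have := (hcont.tendsto e).comp hdiag_tendsto
    refine Tendsto.congr (fun k => ?_) this
    exact (hpow k).symm
  -- symmetry of D and Pker
  have hAT : Aᵀ = A := by
    have := hA.eq
    rwa [conjTranspose_eq_transpose_of_trivial] at this
  have hDT : Dᵀ = D := by
    rw [hD, transpose_sub, transpose_one, transpose_smul, hAT]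
  have hPT : Pkerᵀ = Pker := by
    have h1 : Tendsto (fun k => (D ^ k)ᵀ) atTop (𝓝 Pkerᵀ) :=
      ((continuous_id.matrix_transpose).tendsto Pker).comp hDk
    have h2 : (fun k => (D ^ k)ᵀ) = fun k => D ^ k := by
      funext k; rw [transpose_pow, hDT]
    rw [h2] at h1
    exact tendsto_nhds_unique h1 hDk
  -- idempotency
  have hPP : Pker * Pker = Pker := by
    have h2k : Tendsto (fun k => D ^ (2 * k)) atTop (𝓝 Pker) :=
      hDk.comp (Filter.tendsto_atTop_atTop_of_monotone (fun a b h => by omega)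
        (fun b => ⟨b, by omega⟩))
    have hmul : Tendsto (fun k => D ^ k * D ^ k) atTop (𝓝 (Pker * Pker)) := hDk.mul hDk
    have h2 : (fun k => D ^ k * D ^ k) = fun k => D ^ (2 * k) := by
      funext k; rw [two_mul, pow_add]
    rw [h2] at hmul
    exact tendsto_nhds_unique hmul h2k
  -- A * Pker = 0
  have hAexp : A = γ1 • ((1 : Matrix (Fin p) (Fin p) ℝ) - D) := by
    rw [hD]
    rw [sub_sub_cancel, smul_smul, mul_inv_cancel₀ hγ1.ne', one_smul]
  have hAP : A * Pker = 0 := by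
    have h1 : Tendsto (fun k => A * D ^ k) atTop (𝓝 (A * Pker)) := hDk.const_mul A
    have h2 : (fun k => A * D ^ k) = fun k => γ1 • (D ^ k - D ^ (k + 1)) := by
      funext k
      rw [hAexp, smul_mul_assoc, Matrix.sub_mul, Matrix.one_mul, pow_succ']
    have h3 : Tendsto (fun k => γ1 • (D ^ k - D ^ (k + 1))) atTop
        (𝓝 (γ1 • (Pker - Pker))) :=
      ((hDk.sub (hDk.comp (tendsto_add_atTop_nat 1))).const_smul γ1)
    rw [← h2] at h3
    have := tendsto_nhds_unique h1 h3
    rw [this, sub_self, smul_zero]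
  -- key: A w = 0 → X w = 0
  have hker : ∀ w : Fin p → ℝ, A.mulVec w = 0 → X.mulVec w = 0 := by
    intro w hw
    have h1 : w ⬝ᵥ A.mulVec w = (X.mulVec w) ⬝ᵥ (X.mulVec w) := by
      rw [hA_def, ← mulVec_mulVec, dotProduct_mulVec, vecMul_transpose]
    rw [hw, dotProduct_zero] at h1
    exact dotProduct_self_eq_zero.mp h1.symm
  refine ⟨Pker, hPT, hPP, ?_, ?_, hDk⟩
  · intro v
    apply hker
    rw [mulVec_mulVec, hAP, zero_mulVec]
  · intro v hv
    have hAv : A.mulVec v = 0 := by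
      rw [hA_def, ← mulVec_mulVec, hv, mulVec_zero]
    have hDv : D.mulVec v = v := by
      rw [hD, sub_mulVec, one_mulVec, smul_mulVec, hAv, smul_zero, sub_zero]
    have hDkv : ∀ k : ℕ, (D ^ k).mulVec v = v := by
      intro k
      induction k with
      | zero => simp
      | succ k ih => rw [pow_succ', ← mulVec_mulVec, ih, hDv]
    have h1 : Tendsto (fun k => (D ^ k).mulVec v) atTop (𝓝 (Pker.mulVec v)) :=
      ((continuous_id.matrix_mulVec continuous_const).tendsto Pker).comp hDk
    have h2 : (fun k => (D ^ k).mulVec v) = fun _ => v := funext hDkv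
    rw [h2] at h1
    exact tendsto_nhds_unique h1 tendsto_const_nhds
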